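/- Let m ≥ 1 and let A_1, B_1, ..., A_m, B_m be reals satisfying 0 < A_1 < B_1 < A_2 < B_2 < ... < A_m < B_m. Define ρ_j = ((B_j − A_j)/A_j) · Π_{i ≠ j} (B_i − A_j)/(A_i − A_j), and set a_j = A_j ρ_j/(1 + Σ_{i=1}^m ρ_i) and b_j = ρ_j/(1 + Σ_{i=1}^m ρ_i). Then a_j > 0 and b_j > 0 for all j, Σ_{j=1}^m b_j < 1, and a_j/b_j < a_{j+1}/b_{j+1} for j = 1, ..., m−1; moreover a_j/b_j = A_j for every j. In other words, (a_1, ..., a_m, b_1, ..., b_m) belongs to the domain of the map 𝓛. -/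

import Mathlib

/-- Given reals `0 < A_1 < B_1 < … < A_m < B_m` (0-indexed), with
`ρ_j = ((B_j − A_j)/A_j) · ∏_{i ≠ j} (B_i − A_j)/(A_i − A_j)`,
`a_j = A_j ρ_j/(1 + ∑ᵢ ρ_i)` and `b_j = ρ_j/(1 + ∑ᵢ ρ_i)`, one has `a_j > 0`,
`b_j > 0`, `∑ⱼ b_j < 1`, `a_j/b_j < a_{j+1}/b_{j+1}`, and `a_j/b_j = A_j`;
i.e. `(a, b)` belongs to the domain of the map `𝓛`. -/
theorem stmt_8 (m : ℕ) (hm : 1 ≤ m) (A B : ℕ → ℝ)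
    (hA0 : 0 < A 0)
    (hAB : ∀ j < m, A j < B j)
    (hBA : ∀ j, j + 1 < m → B j < A (j + 1))
    (ρ : ℕ → ℝ)
    (hρ : ∀ j, ρ j = (B j - A j) / A j *
      ∏ i ∈ (Finset.range m).erase j, (B i - A j) / (A i - A j))
    (a b : ℕ → ℝ)
    (ha : ∀ j, a j = A j * ρ j / (1 + ∑ i ∈ Finset.range m, ρ i))
    (hb : ∀ j, b j = ρ j / (1 + ∑ i ∈ Finset.range m, ρ i)) :
    (∀ j < m, 0 < a j) ∧
    (∀ j < m, 0 < b j) ∧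
    (∑ j ∈ Finset.range m, b j < 1) ∧
    (∀ j, j + 1 < m → a j / b j < a (j + 1) / b (j + 1)) ∧
    (∀ j < m, a j / b j = A j) := by
  have hA_lt : ∀ i j, i < j → j < m → B i < A j := by
    intro i j hij hjm
    induction j with
    | zero => omega
    | succ k ih =>
      rcases Nat.lt_succ_iff_lt_or_eq.mp hij with h | h
      · calc B i < A k := ih h (by omega)
          _ < B k := hAB k (by omega)
          _ < A (k + 1) := hBA k hjm
      · subst h; exact hBA i hjm
  have hApos : ∀ j < m, 0 < A j := by
    intro j hj
    rcases Nat.eq_zero_or_pos j with h | h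
    · subst h; exact hA0
    · exact hA0.trans ((hAB 0 (by omega)).trans (hA_lt 0 j h hj))
  have hρpos : ∀ j < m, 0 < ρ j := by
    intro j hj
    rw [hρ]
    apply mul_pos
    · exact div_pos (sub_pos.mpr (hAB j hj)) (hApos j hj)
    · apply Finset.prod_pos
      intro i hi
      simp only [Finset.mem_erase, Finset.mem_range] at hi
      obtain ⟨hne, him⟩ := hi
      rcases lt_or_gt_of_ne hne with h | h
      · have hBi : B i < A j := hA_lt i j h hj
        exact div_pos_of_neg_of_neg (sub_neg.mpr hBi)
          (sub_neg.mpr ((hAB i him).trans hBi))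
      · have hAji : A j < A i := (hAB j hj).trans (hA_lt j i h him)
        exact div_pos (sub_pos.mpr (hAji.trans (hAB i him))) (sub_pos.mpr hAji)
  set S : ℝ := ∑ i ∈ Finset.range m, ρ i with hS
  have hSpos : 0 < S := by
    apply Finset.sum_pos
    · intro i hi; exact hρpos i (Finset.mem_range.mp hi)
    · exact ⟨0, Finset.mem_range.mpr (by omega)⟩
  have hD : (0:ℝ) < 1 + S := by linarith
  have hDne : (1 + S) ≠ 0 := ne_of_gt hD
  have hapos : ∀ j < m, 0 < a j := by
    intro j hj
    rw [ha]
    exact div_pos (mul_pos (hApos j hj) (hρpos j hj)) hD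
  have hbpos : ∀ j < m, 0 < b j := by
    intro j hj
    rw [hb]
    exact div_pos (hρpos j hj) hD
  have hrat : ∀ j < m, a j / b j = A j := by
    intro j hj
    rw [ha, hb]
    have hρne : ρ j ≠ 0 := ne_of_gt (hρpos j hj)
    field_simp
  refine ⟨hapos, hbpos, ?_, ?_, hrat⟩
  · have : ∑ j ∈ Finset.range m, b j = S / (1 + S) := by
      simp only [hb, ← Finset.sum_div]; rfl
    rw [this, div_lt_one hD]
    linarith
  · intro j hj
    rw [hrat j (by omega), hrat (j+1) hj]
    exact (hAB j (by omega)).trans (hBA j hj)
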